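/- For every ε > 0 the periodic unfolding operator U_ε, defined by U_ε(u)(x,y) := u*(ε[x/ε] + εy) for u ∈ L²(Ω) (with u* the zero-extension of u to ℝ^d), is a linear isometry from L²(Ω) into L²(ℝ^d × Y): ‖U_ε(u)‖_{L²(ℝ^d×Y)} = ‖u‖_{L²(Ω)}. Moreover U_ε(uv) = U_ε(u)·U_ε(v) for u, v ∈ L²(Ω). -/

import Mathlib

open MeasureTheory Filter Topology

/-- Componentwise integer part `[x] ∈ ℤ^d` (as a real vector). -/
noncomputable def intPart {d : ℕ} (x : Fin d → ℝ) : Fin d → ℝ :=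
  fun i => (⌊x i⌋ : ℝ)

/-- The reference periodicity cell `Y = [0,1)^d`. -/
def Ybox (d : ℕ) : Set (Fin d → ℝ) :=
  Set.pi Set.univ fun _ => Set.Ico (0:ℝ) 1

/-- The periodic unfolding `U_ε(u)(x,y) = u*(ε[x/ε] + εy)` of `u : Ω → ℝ`,
where `u*` is the extension of `u` by zero to `ℝ^d`. -/
noncomputable def unfoldR {d : ℕ} (ε : ℝ) (Ω : Set (Fin d → ℝ))
    (u : (Fin d → ℝ) → ℝ) : (Fin d → ℝ) → (Fin d → ℝ) → ℝ :=
  fun x y => Set.indicator Ω u (ε • intPart (ε⁻¹ • x) + ε • y)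

namespace Stmt13Aux

open ENNReal

variable {d : ℕ}

/-- The cube `ε(ξ + Y)`. -/
def cube (ε : ℝ) (ξ : Fin d → ℤ) : Set (Fin d → ℝ) :=
  Set.pi Set.univ fun i => Set.Ico (ε * ξ i) (ε * ξ i + ε)

lemma measurableSet_cube (ε : ℝ) (ξ : Fin d → ℤ) : MeasurableSet (cube ε ξ) :=
  MeasurableSet.pi Set.countable_univ fun _ _ => measurableSet_Ico

lemma measurableSet_Ybox : MeasurableSet (Ybox d) :=
  MeasurableSet.pi Set.countable_univ fun _ _ => measurableSet_Ico

lemma mem_cube_iff {ε : ℝ} (hε : 0 < ε) (ξ : Fin d → ℤ) (x : Fin d → ℝ) :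
    x ∈ cube ε ξ ↔ ∀ i, ⌊ε⁻¹ * x i⌋ = ξ i := by
  simp only [cube, Set.mem_pi, Set.mem_univ, forall_true_left, Set.mem_Ico]
  refine forall_congr' fun i => ?_
  rw [Int.floor_eq_iff, le_inv_mul_iff₀ hε, inv_mul_lt_iff₀ hε, mul_add, mul_one]

lemma iUnion_cube {ε : ℝ} (hε : 0 < ε) : (⋃ ξ : Fin d → ℤ, cube ε ξ) = Set.univ := by
  ext x
  simp only [Set.mem_iUnion, Set.mem_univ, iff_true]
  exact ⟨fun i => ⌊ε⁻¹ * x i⌋, (mem_cube_iff hε _ x).2 fun i => rfl⟩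

lemma pairwise_cube {ε : ℝ} (hε : 0 < ε) :
    Pairwise (Function.onFun Disjoint (cube (d := d) ε)) := by
  intro ξ η hne
  rw [Function.onFun, Set.disjoint_left]
  intro x hx hx'
  exact hne (funext fun i =>
    ((mem_cube_iff hε ξ x).1 hx i).symm.trans ((mem_cube_iff hε η x).1 hx' i))

lemma volume_cube {ε : ℝ} (hε : 0 < ε) (ξ : Fin d → ℤ) :
    volume (cube ε ξ) = ENNReal.ofReal ε ^ d := by
  rw [cube, volume_pi_pi]
  simp [Real.volume_Ico, add_sub_cancel_left]

lemma add_smul_mem_cube_iff {ε : ℝ} (hε : 0 < ε) (ξ : Fin d → ℤ) (y : Fin d → ℝ) :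
    ((fun i => ε * (ξ i : ℝ)) + ε • y) ∈ cube ε ξ ↔ y ∈ Ybox d := by
  simp only [cube, Ybox, Set.mem_pi, Set.mem_univ, forall_true_left, Set.mem_Ico,
    Pi.add_apply, Pi.smul_apply, smul_eq_mul]
  refine forall_congr' fun i => ?_
  rw [le_add_iff_nonneg_right, add_lt_add_iff_left, mul_nonneg_iff_of_pos_left hε,
    mul_lt_iff_lt_one_right hε]

lemma intPart_eq {ε : ℝ} (hε : 0 < ε) {ξ : Fin d → ℤ} {x : Fin d → ℝ}
    (hx : x ∈ cube ε ξ) :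
    ε • intPart (ε⁻¹ • x) = fun i => ε * (ξ i : ℝ) := by
  funext i
  have h := (mem_cube_iff hε ξ x).1 hx i
  simp [intPart, Pi.smul_apply, smul_eq_mul, h]

lemma lintegral_scale {ε : ℝ} (hε : ε ≠ 0) (f : (Fin d → ℝ) → ℝ≥0∞)
    (hf : Measurable f) :
    (∫⁻ y, f (ε • y)) = ENNReal.ofReal |(ε ^ d)⁻¹| * ∫⁻ z, f z := by
  have h := MeasureTheory.Measure.map_addHaar_smul (volume : Measure (Fin d → ℝ)) hε
  rw [Module.finrank_fintype_fun_eq_card, Fintype.card_fin] at h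
  rw [← lintegral_map hf (measurable_const_smul ε), h, lintegral_smul_measure, smul_eq_mul]

/-- The main unfolding identity for nonnegative measurable integrands. -/
lemma unfold_lintegral {ε : ℝ} (hε : 0 < ε) (g : (Fin d → ℝ) → ℝ≥0∞)
    (hg : Measurable g) :
    (∫⁻ x, ∫⁻ y in Ybox d, g (ε • intPart (ε⁻¹ • x) + ε • y)) = ∫⁻ z, g z := by
  have hεne : ε ≠ 0 := ne_of_gt hε
  have hc0 : (ENNReal.ofReal ε) ^ d ≠ 0 := pow_ne_zero _ (ENNReal.ofReal_pos.2 hε).ne'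
  have hctop : (ENNReal.ofReal ε) ^ d ≠ ⊤ := ENNReal.pow_ne_top ENNReal.ofReal_ne_top
  -- per-cube change of variables
  have key : ∀ ξ : Fin d → ℤ,
      (∫⁻ y in Ybox d, g ((fun i => ε * (ξ i : ℝ)) + ε • y)) * ENNReal.ofReal ε ^ d
        = ∫⁻ z in cube ε ξ, g z := by
    intro ξ
    set a : Fin d → ℝ := fun i => ε * (ξ i : ℝ) with ha
    have h1 : (∫⁻ y in Ybox d, g (a + ε • y))
        = ∫⁻ y, (cube ε ξ).indicator g (a + ε • y) := by
      rw [← lintegral_indicator measurableSet_Ybox _]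
      congr 1
      funext y
      by_cases hy : y ∈ Ybox d
      · rw [Set.indicator_of_mem hy,
          Set.indicator_of_mem ((add_smul_mem_cube_iff hε ξ y).2 hy)]
      · rw [Set.indicator_of_notMem hy,
          Set.indicator_of_notMem (fun h => hy ((add_smul_mem_cube_iff hε ξ y).1 h))]
    have hmeas : Measurable fun z => (cube ε ξ).indicator g (a + z) :=
      (hg.indicator (measurableSet_cube ε ξ)).comp (measurable_const_add a)
    have h2 : (∫⁻ y, (cube ε ξ).indicator g (a + ε • y))
        = ENNReal.ofReal |(ε ^ d)⁻¹| * ∫⁻ z, (cube ε ξ).indicator g (a + z) :=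
      lintegral_scale hεne _ hmeas
    have h3 : (∫⁻ z, (cube ε ξ).indicator g (a + z)) = ∫⁻ z in cube ε ξ, g z := by
      rw [lintegral_add_left_eq_self (fun z => (cube ε ξ).indicator g z) a,
        lintegral_indicator (measurableSet_cube ε ξ) _]
    rw [h1, h2, h3, abs_of_nonneg (by positivity : (0:ℝ) ≤ (ε ^ d)⁻¹),
      ENNReal.ofReal_inv_of_pos (by positivity), ENNReal.ofReal_pow hε.le,
      mul_comm, ← mul_assoc, ENNReal.mul_inv_cancel hc0 hctop, one_mul]
  calc
    (∫⁻ x, ∫⁻ y in Ybox d, g (ε • intPart (ε⁻¹ • x) + ε • y))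
        = ∫⁻ x in Set.univ, ∫⁻ y in Ybox d, g (ε • intPart (ε⁻¹ • x) + ε • y) :=
      (setLIntegral_univ _).symm
    _ = ∫⁻ x in ⋃ ξ : Fin d → ℤ, cube ε ξ,
          ∫⁻ y in Ybox d, g (ε • intPart (ε⁻¹ • x) + ε • y) := by
      rw [iUnion_cube hε]
    _ = ∑' ξ : Fin d → ℤ, ∫⁻ x in cube ε ξ,
          ∫⁻ y in Ybox d, g (ε • intPart (ε⁻¹ • x) + ε • y) :=
      lintegral_iUnion (fun ξ => measurableSet_cube ε ξ) (pairwise_cube hε) _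
    _ = ∑' ξ : Fin d → ℤ, ∫⁻ z in cube ε ξ, g z := by
      refine tsum_congr fun ξ => ?_
      rw [← key ξ,
        setLIntegral_congr_fun (measurableSet_cube ε ξ)
          (fun x hx => by rw [intPart_eq hε hx]),
        setLIntegral_const, volume_cube hε]
    _ = ∫⁻ z in ⋃ ξ : Fin d → ℤ, cube ε ξ, g z :=
      (lintegral_iUnion (fun ξ => measurableSet_cube ε ξ) (pairwise_cube hε) g).symm
    _ = ∫⁻ z, g z := by rw [iUnion_cube hε, setLIntegral_univ]

end Stmt13Aux

/-- The periodic unfolding operator is a linear isometry from `L²(Ω)` into `L²(ℝ^d × Y)` and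
satisfies the product rule `U_ε(uv) = U_ε(u)·U_ε(v)`. -/
theorem stmt13 {d : ℕ} (hd : 1 ≤ d) (ε : ℝ) (hε : 0 < ε)
    (Ω : Set (Fin d → ℝ)) (hΩo : IsOpen Ω) (hΩb : Bornology.IsBounded Ω) :
    -- linearity
    (∀ (a b : ℝ) (u v : (Fin d → ℝ) → ℝ),
      unfoldR ε Ω (fun x => a * u x + b * v x)
        = fun x y => a * unfoldR ε Ω u x y + b * unfoldR ε Ω v x y) ∧
    -- isometry: `‖U_ε u‖_{L²(ℝ^d×Y)} = ‖u‖_{L²(Ω)}`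
    (∀ u : (Fin d → ℝ) → ℝ, Measurable u →
      (∫⁻ x, ∫⁻ y in Ybox d, ENNReal.ofReal ((unfoldR ε Ω u x y) ^ 2))
        = ∫⁻ x in Ω, ENNReal.ofReal ((u x) ^ 2)) ∧
    -- product rule
    (∀ u v : (Fin d → ℝ) → ℝ,
      unfoldR ε Ω (fun x => u x * v x)
        = fun x y => unfoldR ε Ω u x y * unfoldR ε Ω v x y) := by
  refine ⟨?_, ?_, ?_⟩
  · intro a b u v
    funext x y
    simp only [unfoldR]
    by_cases h : (ε • intPart (ε⁻¹ • x) + ε • y) ∈ Ω <;> simp [h]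
  · intro u hu
    set g : (Fin d → ℝ) → ENNReal :=
      Ω.indicator fun w => ENNReal.ofReal (u w ^ 2) with hgdef
    have hpt : ∀ z : Fin d → ℝ,
        ENNReal.ofReal ((Ω.indicator u z) ^ 2) = g z := by
      intro z
      by_cases hz : z ∈ Ω <;> simp [hgdef, hz]
    have hg : Measurable g :=
      ((hu.pow_const 2).ennreal_ofReal).indicator hΩo.measurableSet
    calc
      (∫⁻ x, ∫⁻ y in Ybox d, ENNReal.ofReal ((unfoldR ε Ω u x y) ^ 2))
          = ∫⁻ x, ∫⁻ y in Ybox d, g (ε • intPart (ε⁻¹ • x) + ε • y) := by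
        simp only [unfoldR, hpt]
      _ = ∫⁻ z, g z := Stmt13Aux.unfold_lintegral hε g hg
      _ = ∫⁻ x in Ω, ENNReal.ofReal (u x ^ 2) := by
        rw [hgdef, lintegral_indicator hΩo.measurableSet _]
  · intro u v
    funext x y
    simp only [unfoldR]
    by_cases h : (ε • intPart (ε⁻¹ • x) + ε • y) ∈ Ω <;> simp [h]
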